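/- Every finite chordal simple graph with at least two vertices has at least two simplicial vertices. -/

import Mathlib

/-- A simple graph is chordal if every cycle of length at least four has a
chord: an edge of the graph joining two vertices of the cycle that are not
consecutive on the cycle (i.e. the edge is not an edge of the cycle). -/
def SimpleGraph.IsChordal {V : Type*} (G : SimpleGraph V) : Prop :=
  ∀ (v : V) (c : G.Walk v v), c.IsCycle → 4 ≤ c.length →
    ∃ x y : V, x ∈ c.support ∧ y ∈ c.support ∧ G.Adj x y ∧ s(x, y) ∉ c.edges

/-- A vertex is simplicial if its neighborhood is a clique. -/
def SimpleGraph.IsSimplicial {V : Type*} (G : SimpleGraph V) (v : V) : Prop :=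
  ∀ x y : V, G.Adj v x → G.Adj v y → x ≠ y → G.Adj x y

namespace ChordalAux

open SimpleGraph Walk

variable {V : Type*} {G : SimpleGraph V}

lemma edge_mem_of_length_eq_one {u v : V} (w : G.Walk u v) (h : w.length = 1) :
    s(u, v) ∈ w.edges := by
  cases w with
  | nil => simp at h
  | cons hadj q =>
    cases q with
    | nil => simp
    | cons _ _ => simp [Walk.length_cons] at h

lemma shortcut [DecidableEq V] {x y u v : V} (P : G.Walk x y) (hu : u ∈ P.support)
    (hv : v ∈ (P.dropUntil u hu).support) (hadj : G.Adj u v)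
    (hne : s(u, v) ∉ P.edges) :
    ∃ Q : G.Walk x y, Q.length < P.length ∧ ∀ w ∈ Q.support, w ∈ P.support := by
  have hPlen : P.length = (P.takeUntil u hu).length + (P.dropUntil u hu).length := by
    conv_lhs => rw [← take_spec P hu]
    rw [Walk.length_append]
  have hdlen : (P.dropUntil u hu).length =
      ((P.dropUntil u hu).takeUntil v hv).length + ((P.dropUntil u hu).dropUntil v hv).length := by
    conv_lhs => rw [← take_spec (P.dropUntil u hu) hv]
    rw [Walk.length_append]
  have hg2 : 2 ≤ ((P.dropUntil u hu).takeUntil v hv).length := by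
    rcases Nat.lt_or_ge ((P.dropUntil u hu).takeUntil v hv).length 2 with h | h
    · interval_cases hl : ((P.dropUntil u hu).takeUntil v hv).length
      · exact absurd (Walk.eq_of_length_eq_zero hl) hadj.ne
      · exact absurd (P.edges_dropUntil_subset hu
          ((P.dropUntil u hu).edges_takeUntil_subset hv
            (edge_mem_of_length_eq_one _ hl))) hne
    · exact h
  refine ⟨(P.takeUntil u hu).append
    (Walk.cons hadj ((P.dropUntil u hu).dropUntil v hv)), ?_, ?_⟩
  · rw [Walk.length_append, Walk.length_cons]
    omega
  · intro w hw
    rw [Walk.mem_support_append_iff] at hw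
    rcases hw with hw | hw
    · exact P.support_takeUntil_subset hu hw
    · rw [Walk.support_cons, List.mem_cons] at hw
      rcases hw with rfl | hw
      · exact hu
      · exact P.support_dropUntil_subset hu
          ((P.dropUntil u hu).support_dropUntil_subset hv hw)

lemma exists_chordless_path {T : V → Prop} {x y : V}
    (w : G.Walk x y) (hw : ∀ v ∈ w.support, T v) :
    ∃ P : G.Walk x y, P.IsPath ∧ (∀ v ∈ P.support, T v) ∧
      ∀ u v, u ∈ P.support → v ∈ P.support → G.Adj u v → s(u, v) ∈ P.edges := by
  classical
  have hex : ∃ n, ∃ P : G.Walk x y, P.IsPath ∧ (∀ v ∈ P.support, T v) ∧ P.length = n :=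
    ⟨_, w.bypass, w.bypass_isPath, fun v hv => hw v (w.support_bypass_subset hv), rfl⟩
  obtain ⟨P, hPpath, hPT, hPlen⟩ := Nat.find_spec hex
  refine ⟨P, hPpath, hPT, ?_⟩
  intro u v hu hv hadj
  by_contra hne
  have main : ∃ Q : G.Walk x y, Q.length < P.length ∧ ∀ z ∈ Q.support, z ∈ P.support := by
    have hv' := hv
    rw [← take_spec P hu, Walk.mem_support_append_iff] at hv'
    rcases hv' with h | h
    · obtain ⟨t', ht'len, ht'sup⟩ := shortcut (P.takeUntil u hu) h
        (Walk.end_mem_support _) hadj.symm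
        (fun hmem => hne (P.edges_takeUntil_subset hu (by rwa [Sym2.eq_swap] at hmem)))
      refine ⟨t'.append (P.dropUntil u hu), ?_, ?_⟩
      · have : P.length = (P.takeUntil u hu).length + (P.dropUntil u hu).length := by
          conv_lhs => rw [← take_spec P hu]
          rw [Walk.length_append]
        rw [Walk.length_append]
        omega
      · intro z hz
        rw [Walk.mem_support_append_iff] at hz
        rcases hz with hz | hz
        · exact P.support_takeUntil_subset hu (ht'sup z hz)
        · exact P.support_dropUntil_subset hu hz
    · exact shortcut P hu h hadj hne
  obtain ⟨Q, hQlen, hQsup⟩ := main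
  have hwit : ∃ P' : G.Walk x y, P'.IsPath ∧ (∀ v ∈ P'.support, T v) ∧
      P'.length = Q.bypass.length :=
    ⟨Q.bypass, Q.bypass_isPath,
      fun v hv => hPT v (hQsup v (Q.support_bypass_subset hv)), rfl⟩
  have hlt : Q.bypass.length < Nat.find hex :=
    lt_of_le_of_lt (Q.length_bypass_le) (by omega)
  exact Nat.find_min hex hlt hwit

lemma walk_in_component {T : V → Prop} {A : Finset V} {z c : V} (w : G.Walk z c) :
    c ∈ A → (∀ p q, q ∈ A → G.Adj p q → T p → p ∈ A) →
    (∀ v ∈ w.support, T v) →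
    ∃ w' : G.Walk z c, ∀ v ∈ w'.support, v ∈ A := by
  induction w with
  | nil =>
    intro hc _ _
    exact ⟨Walk.nil, by simpa using hc⟩
  | @cons p q r hpq w₂ ihw =>
    intro hc hclosed hw
    obtain ⟨w₂', hw₂'⟩ := ihw hc hclosed (fun v hv => hw v (by simp [hv]))
    have hq : q ∈ A := hw₂' q (Walk.start_mem_support _)
    have hp : p ∈ A := hclosed p q hq hpq (hw p (Walk.start_mem_support _))
    refine ⟨Walk.cons hpq w₂', ?_⟩
    intro v hv
    rw [Walk.support_cons, List.mem_cons] at hv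
    rcases hv with rfl | hv
    · exact hp
    · exact hw₂' v hv

lemma dirac {V : Type*} [DecidableEq V] {G : SimpleGraph V} (hG : G.IsChordal) (s : Finset V) :
    (∀ x ∈ s, ∀ y ∈ s, x ≠ y → G.Adj x y) ∨
    ∃ u ∈ s, ∃ v ∈ s, ¬ G.Adj u v ∧ u ≠ v ∧
      (∀ x ∈ s, ∀ y ∈ s, G.Adj u x → G.Adj u y → x ≠ y → G.Adj x y) ∧
      (∀ x ∈ s, ∀ y ∈ s, G.Adj v x → G.Adj v y → x ≠ y → G.Adj x y) := by
  classical
  induction s using Finset.strongInductionOn with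
  | _ s ih =>
  by_cases hclq : ∀ x ∈ s, ∀ y ∈ s, x ≠ y → G.Adj x y
  · exact Or.inl hclq
  right
  push_neg at hclq
  obtain ⟨a, ha, b, hb, hne_ab, hnadj⟩ := hclq
  -- the family of separators
  have hcand_ne : ∃ T : Finset V, T ⊆ s \ {a, b} ∧
      ¬ ∃ w : G.Walk a b, ∀ v ∈ w.support, v ∈ s \ T := by
    refine ⟨s \ {a, b}, subset_rfl, ?_⟩
    rintro ⟨w, hw⟩
    cases w with
    | nil => exact hne_ab rfl
    | @cons _ z _ h q =>
      have hz : z ∈ s \ (s \ {a, b}) := hw z (by simp)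
      have hz2 : z ∈ ({a, b} : Finset V) := by
        simp only [Finset.mem_sdiff] at hz
        by_contra hzz
        exact hz.2 ⟨hz.1, hzz⟩
      rcases Finset.mem_insert.mp hz2 with rfl | hz3
      · exact G.irrefl h
      · rw [Finset.mem_singleton] at hz3
        subst hz3
        exact hnadj h
  -- choose a minimum-cardinality separator S
  have hSex : ∃ S : Finset V, (S ⊆ s \ {a, b} ∧
      ¬ ∃ w : G.Walk a b, ∀ v ∈ w.support, v ∈ s \ S) ∧
      ∀ T : Finset V, (T ⊆ s \ {a, b} ∧
        ¬ ∃ w : G.Walk a b, ∀ v ∈ w.support, v ∈ s \ T) → S.card ≤ T.card := by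
    obtain ⟨T₀, hT₀⟩ := hcand_ne
    let cand : Finset (Finset V) := (s \ {a, b}).powerset.filter
      (fun T => ¬ ∃ w : G.Walk a b, ∀ v ∈ w.support, v ∈ s \ T)
    have hmem : ∀ T : Finset V, T ∈ cand ↔ (T ⊆ s \ {a, b} ∧
        ¬ ∃ w : G.Walk a b, ∀ v ∈ w.support, v ∈ s \ T) := by
      intro T
      simp [cand, Finset.mem_filter, Finset.mem_powerset]
    obtain ⟨S, hS, hSmin⟩ := Finset.exists_min_image cand Finset.card ⟨T₀, (hmem T₀).mpr hT₀⟩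
    exact ⟨S, (hmem S).mp hS, fun T hT => hSmin T ((hmem T).mpr hT)⟩
  obtain ⟨S, ⟨hSsub, hSsep⟩, hSmin⟩ := hSex
  have haS : a ∉ S := fun h => by simpa using (Finset.mem_sdiff.mp (hSsub h)).2
  have hbS : b ∉ S := fun h => by simpa using (Finset.mem_sdiff.mp (hSsub h)).2
  have ha' : a ∈ s \ S := Finset.mem_sdiff.mpr ⟨ha, haS⟩
  have hb' : b ∈ s \ S := Finset.mem_sdiff.mpr ⟨hb, hbS⟩
  -- components
  let comp : V → Finset V := fun c => (s \ S).filter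
    (fun z => ∃ w : G.Walk c z, ∀ v ∈ w.support, v ∈ s \ S)
  have hcomp_sub : ∀ c, comp c ⊆ s \ S := fun c => Finset.filter_subset _ _
  have hcomp_mem : ∀ c, c ∈ s \ S → c ∈ comp c := by
    intro c hc
    exact Finset.mem_filter.mpr ⟨hc, Walk.nil, by simpa using hc⟩
  have hcomp_closed : ∀ c z y, z ∈ comp c → G.Adj z y → y ∈ s \ S → y ∈ comp c := by
    intro c z y hz hadj hy
    obtain ⟨hz1, w, hw⟩ := Finset.mem_filter.mp hz
    refine Finset.mem_filter.mpr ⟨hy, w.concat hadj, ?_⟩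
    intro v hv
    rw [Walk.support_concat, List.mem_append] at hv
    rcases hv with hv | hv
    · exact hw v hv
    · rw [List.mem_singleton] at hv
      subst hv
      exact hy
  -- any vertex of a component is joined to the root by a walk inside the component
  have hcomp_walk : ∀ c, c ∈ s \ S → ∀ z, z ∈ comp c →
      ∃ w : G.Walk c z, ∀ v ∈ w.support, v ∈ comp c := by
    intro c hc z hz
    obtain ⟨hz1, w, hw⟩ := Finset.mem_filter.mp hz
    obtain ⟨w'', hw''⟩ := walk_in_component (T := fun v => v ∈ s \ S) w.reverse
      (hcomp_mem c hc)
      (fun p q hq hpq hp => hcomp_closed c q p hq hpq.symm hp)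
      (fun v hv => hw v (by rwa [Walk.support_reverse, List.mem_reverse] at hv))
    exact ⟨w''.reverse, fun v hv => hw'' v (by rwa [Walk.support_reverse, List.mem_reverse] at hv)⟩
  -- components of a and b are disjoint
  have hAB : ∀ z, z ∈ comp a → z ∈ comp b → False := by
    intro z hza hzb
    obtain ⟨_, w1, hw1⟩ := Finset.mem_filter.mp hza
    obtain ⟨_, w2, hw2⟩ := Finset.mem_filter.mp hzb
    refine hSsep ⟨w1.append w2.reverse, ?_⟩
    intro v hv
    rw [Walk.mem_support_append_iff] at hv
    rcases hv with hv | hv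
    · exact hw1 v hv
    · exact hw2 v (by rwa [Walk.support_reverse, List.mem_reverse] at hv)
  -- every vertex of S has a neighbour in comp a and in comp b
  have hnbr : ∀ x ∈ S, ∀ c, (c = a ∨ c = b) → ∃ z ∈ comp c, G.Adj x z := by
    intro x hx c hcab
    by_contra hno
    push_neg at hno
    have hc' : c ∈ s \ S := by rcases hcab with rfl | rfl <;> assumption
    -- S.erase x would still be a separator, contradicting minimality
    have hsmaller : S.card ≤ (S.erase x).card := by
      refine hSmin (S.erase x) ⟨(Finset.erase_subset x S).trans hSsub, ?_⟩
      rintro ⟨w, hw⟩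
      have hclosed' : ∀ p q, q ∈ comp c → G.Adj p q → p ∈ s \ (S.erase x) → p ∈ comp c := by
        intro p q hq hpq hp
        rcases Finset.mem_sdiff.mp hp with ⟨hp1, hp2⟩
        by_cases hpS : p ∈ S
        · have hpx : p = x := by
            by_contra hpx
            exact hp2 (Finset.mem_erase.mpr ⟨hpx, hpS⟩)
          subst hpx
          exact absurd hpq (hno q hq)
        · exact hcomp_closed c q p hq hpq.symm (Finset.mem_sdiff.mpr ⟨hp1, hpS⟩)
      rcases hcab with rfl | rfl
      · -- c = a : then b ∈ comp a, giving a walk a → b inside s \ S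
        obtain ⟨w', hw'⟩ := walk_in_component (T := fun v => v ∈ s \ (S.erase x)) w.reverse
          (hcomp_mem c hc') hclosed'
          (fun v hv => hw v (by rwa [Walk.support_reverse, List.mem_reverse] at hv))
        exact hSsep ⟨w'.reverse, fun v hv => hcomp_sub c (hw' v
          (by rwa [Walk.support_reverse, List.mem_reverse] at hv))⟩
      · -- c = b : then a ∈ comp b
        obtain ⟨w', hw'⟩ := walk_in_component (T := fun v => v ∈ s \ (S.erase x)) w
          (hcomp_mem c hc') hclosed' hw
        exact hSsep ⟨w', fun v hv => hcomp_sub c (hw' v hv)⟩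
    have := Finset.card_erase_lt_of_mem hx
    omega
  -- vertices of S lie in no component
  have hxSc : ∀ x ∈ S, ∀ c, x ∉ comp c :=
    fun x hx c h => (Finset.mem_sdiff.mp (hcomp_sub c h)).2 hx
  -- S is a clique
  have hSclq : ∀ x ∈ S, ∀ y ∈ S, x ≠ y → G.Adj x y := by
    intro x hx y hy hxy
    by_contra hnxy
    have hW : ∀ c, (c = a ∨ c = b) →
        ∃ W : G.Walk x y, ∀ v ∈ W.support, v ∈ comp c ∨ v = x ∨ v = y := by
      intro c hcab
      have hc' : c ∈ s \ S := by rcases hcab with rfl | rfl <;> assumption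
      obtain ⟨zx, hzx, hzxadj⟩ := hnbr x hx c hcab
      obtain ⟨zy, hzy, hzyadj⟩ := hnbr y hy c hcab
      obtain ⟨w1, hw1⟩ := hcomp_walk c hc' zx hzx
      obtain ⟨w2, hw2⟩ := hcomp_walk c hc' zy hzy
      refine ⟨Walk.cons hzxadj ((w1.reverse.append w2).concat hzyadj.symm), ?_⟩
      intro v hv
      rw [Walk.support_cons, List.mem_cons] at hv
      rcases hv with rfl | hv
      · exact Or.inr (Or.inl rfl)
      · rw [Walk.support_concat, List.mem_append] at hv
        rcases hv with hv | hv
        · rw [Walk.mem_support_append_iff] at hv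
          rcases hv with hv | hv
          · exact Or.inl (hw1 v (by rwa [Walk.support_reverse, List.mem_reverse] at hv))
          · exact Or.inl (hw2 v hv)
        · rw [List.mem_singleton] at hv
          exact Or.inr (Or.inr hv)
    obtain ⟨WA, hWA⟩ := hW a (Or.inl rfl)
    obtain ⟨WB, hWB⟩ := hW b (Or.inr rfl)
    obtain ⟨P, hPpath, hPT, hPchord⟩ := exists_chordless_path WA hWA
    obtain ⟨P', hP'path, hP'T, hP'chord⟩ := exists_chordless_path WB hWB
    have hlen2 : ∀ w : G.Walk x y, 2 ≤ w.length := by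
      intro w
      rcases Nat.lt_or_ge w.length 2 with h | h
      · interval_cases hl : w.length
        · exact absurd (Walk.eq_of_length_eq_zero hl) hxy
        · exact absurd (w.adj_of_mem_edges (edge_mem_of_length_eq_one w hl)) hnxy
      · exact h
    set Q := P'.reverse with hQdef
    have hQpath : Q.IsPath := hP'path.reverse
    have hQsup : ∀ v, v ∈ Q.support ↔ v ∈ P'.support := by
      intro v
      rw [hQdef, Walk.support_reverse, List.mem_reverse]
    have hQedges : ∀ e, e ∈ Q.edges ↔ e ∈ P'.edges := by
      intro e
      rw [hQdef, Walk.edges_reverse, List.mem_reverse]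
    set c0 : G.Walk x x := P.append Q with hc0
    have hc0len : c0.length = P.length + P'.length := by
      rw [hc0, Walk.length_append, hQdef, Walk.length_reverse]
    have hxP : x ∉ P.support.tail := by
      have h := hPpath.support_nodup
      rw [Walk.support_eq_cons] at h
      exact (List.nodup_cons.mp h).1
    have hyQ : y ∉ Q.support.tail := by
      have h := hQpath.support_nodup
      rw [Walk.support_eq_cons] at h
      exact (List.nodup_cons.mp h).1
    have hcyc : c0.IsCycle := by
      refine ⟨⟨⟨?_⟩, ?_⟩, ?_⟩
      · -- edges nodup
        rw [hc0, Walk.edges_append]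
        refine List.Nodup.append hPpath.edges_nodup hQpath.edges_nodup ?_
        intro e heP heQ
        induction e using Sym2.ind with
        | _ m n =>
          have hmP := P.fst_mem_support_of_mem_edges heP
          have hnP := P.snd_mem_support_of_mem_edges heP
          have hmB := P'.fst_mem_support_of_mem_edges ((hQedges _).mp heQ)
          have hnB := P'.snd_mem_support_of_mem_edges ((hQedges _).mp heQ)
          have hmn := P.adj_of_mem_edges heP
          have hm : m = x ∨ m = y := by
            rcases hPT m hmP with h1 | h1 | h1
            · rcases hP'T m hmB with h2 | h2 | h2
              · exact absurd h2 (fun h2 => hAB m h1 h2)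
              · exact Or.inl h2
              · exact Or.inr h2
            · exact Or.inl h1
            · exact Or.inr h1
          have hn : n = x ∨ n = y := by
            rcases hPT n hnP with h1 | h1 | h1
            · rcases hP'T n hnB with h2 | h2 | h2
              · exact absurd h2 (fun h2 => hAB n h1 h2)
              · exact Or.inl h2
              · exact Or.inr h2
            · exact Or.inl h1
            · exact Or.inr h1
          rcases hm with rfl | rfl <;> rcases hn with rfl | rfl
          · exact hmn.ne rfl
          · exact hnxy hmn
          · exact hnxy hmn.symm
          · exact hmn.ne rfl
      · -- not nil
        intro h
        have h2 := hlen2 P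
        have hl0 : c0.length = 0 := by rw [h]; rfl
        omega
      · -- support tail nodup
        have hctail : c0.support.tail = P.support.tail ++ Q.support.tail := by
          rw [hc0, Walk.tail_support_append]
        rw [hctail]
        refine List.Nodup.append hPpath.support_nodup.tail hQpath.support_nodup.tail ?_
        intro z hzP hzQ
        have hzP' : z ∈ P.support := List.mem_of_mem_tail hzP
        have hzQ' : z ∈ Q.support := List.mem_of_mem_tail hzQ
        have hzx : z ≠ x := fun h => hxP (h ▸ hzP)
        have hzy : z ≠ y := fun h => hyQ (h ▸ hzQ)
        rcases hPT z hzP' with h1 | h1 | h1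
        · rcases hP'T z ((hQsup z).mp hzQ') with h2 | h2 | h2
          · exact hAB z h1 h2
          · exact hzx h2
          · exact hzy h2
        · exact hzx h1
        · exact hzy h1
    have hclen4 : 4 ≤ c0.length := by
      have h1 := hlen2 P
      have h2 := hlen2 P'
      omega
    obtain ⟨m, n, hm, hn, hmn, hnmem⟩ := hG x c0 hcyc hclen4
    apply hnmem
    have hmem : ∀ z, z ∈ c0.support → z ∈ P.support ∨ z ∈ Q.support := by
      intro z hz
      rw [hc0, Walk.mem_support_append_iff] at hz
      exact hz
    have hedge : ∀ e, e ∈ P.edges ∨ e ∈ Q.edges → e ∈ c0.edges := by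
      intro e he
      rw [hc0, Walk.edges_append, List.mem_append]
      exact he
    have hcross : ∀ p q, p ∈ P.support → q ∈ Q.support → G.Adj p q →
        q ∈ P.support ∨ p ∈ Q.support := by
      intro p q hp hq hpq
      by_contra hcon
      push_neg at hcon
      obtain ⟨h1, h2⟩ := hcon
      have hpa : p ∈ comp a := by
        rcases hPT p hp with h | h | h
        · exact h
        · exact absurd (h ▸ Walk.end_mem_support Q) h2
        · exact absurd (h ▸ Walk.start_mem_support Q) h2
      have hqb : q ∈ comp b := by
        rcases hP'T q ((hQsup q).mp hq) with h | h | h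
        · exact h
        · exact absurd (h ▸ Walk.start_mem_support P) h1
        · exact absurd (h ▸ Walk.end_mem_support P) h1
      exact hAB q (hcomp_closed a p q hpa hpq (hcomp_sub b hqb)) hqb
    rcases hmem m hm with hmP | hmQ <;> rcases hmem n hn with hnP | hnQ
    · exact hedge _ (Or.inl (hPchord m n hmP hnP hmn))
    · rcases hcross m n hmP hnQ hmn with h | h
      · exact hedge _ (Or.inl (hPchord m n hmP h hmn))
      · exact hedge _ (Or.inr ((hQedges _).mpr
          (hP'chord m n ((hQsup m).mp h) ((hQsup n).mp hnQ) hmn)))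
    · rcases hcross n m hnP hmQ hmn.symm with h | h
      · exact hedge _ (Or.inl (hPchord m n h hnP hmn))
      · exact hedge _ (Or.inr ((hQedges _).mpr
          (hP'chord m n ((hQsup m).mp hmQ) ((hQsup n).mp h) hmn)))
    · exact hedge _ (Or.inr ((hQedges _).mpr
        (hP'chord m n ((hQsup m).mp hmQ) ((hQsup n).mp hnQ) hmn)))
  -- a simplicial vertex inside each of the two components
  have hstep : ∀ c, c ∈ s \ S → ∀ d, d ∈ s → d ∉ S → d ∉ comp c →
      ∃ u ∈ comp c, ∀ p ∈ s, ∀ q ∈ s, G.Adj u p → G.Adj u q → p ≠ q → G.Adj p q := by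
    intro c hc d hd hdS hdc
    have hsub1 : comp c ∪ S ⊆ s := by
      intro z hz
      rcases Finset.mem_union.mp hz with h | h
      · exact (Finset.mem_sdiff.mp (hcomp_sub c h)).1
      · exact (Finset.mem_sdiff.mp (hSsub h)).1
    have hss : comp c ∪ S ⊂ s := by
      refine (Finset.ssubset_iff_of_subset hsub1).mpr ⟨d, hd, ?_⟩
      rw [Finset.mem_union]
      rintro (h | h)
      · exact hdc h
      · exact hdS h
    have hclosed_s : ∀ z, z ∈ comp c → ∀ p, p ∈ s → G.Adj z p → p ∈ comp c ∪ S := by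
      intro z hz p hp hzp
      by_cases hpS : p ∈ S
      · exact Finset.mem_union_right _ hpS
      · exact Finset.mem_union_left _
          (hcomp_closed c z p hz hzp (Finset.mem_sdiff.mpr ⟨hp, hpS⟩))
    rcases ih (comp c ∪ S) hss with hclq2 | ⟨u, hu, v, hv, hnadj2, hne2, hsimpu, hsimpv⟩
    · have hcc : c ∈ comp c := hcomp_mem c hc
      refine ⟨c, hcc, ?_⟩
      intro p hp q hq h1 h2 hpq
      exact hclq2 p (hclosed_s c hcc p hp h1) q (hclosed_s c hcc q hq h2) hpq
    · by_cases huc : u ∈ comp c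
      · refine ⟨u, huc, ?_⟩
        intro p hp q hq h1 h2 hpq
        exact hsimpu p (hclosed_s u huc p hp h1) q (hclosed_s u huc q hq h2) h1 h2 hpq
      · have huS : u ∈ S := by
          rcases Finset.mem_union.mp hu with h | h
          · exact absurd h huc
          · exact h
        have hvc : v ∈ comp c := by
          rcases Finset.mem_union.mp hv with h | h
          · exact h
          · exact absurd (hSclq u huS v h hne2) hnadj2
        refine ⟨v, hvc, ?_⟩
        intro p hp q hq h1 h2 hpq
        exact hsimpv p (hclosed_s v hvc p hp h1) q (hclosed_s v hvc q hq h2) h1 h2 hpq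
  obtain ⟨u, huA, husimp⟩ := hstep a ha' b hb hbS (fun h => hAB b h (hcomp_mem b hb'))
  obtain ⟨v, hvB, hvsimp⟩ := hstep b hb' a ha haS (fun h => hAB a (hcomp_mem a ha') h)
  refine ⟨u, (Finset.mem_sdiff.mp (hcomp_sub a huA)).1, v,
    (Finset.mem_sdiff.mp (hcomp_sub b hvB)).1, ?_, ?_, husimp, hvsimp⟩
  · intro h
    exact hAB v (hcomp_closed a u v huA h (hcomp_sub b hvB)) hvB
  · intro h
    exact hAB u huA (h ▸ hvB)

end ChordalAux

/-- Every finite chordal simple graph with at least two vertices has at least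
two simplicial vertices. -/
theorem chordal_two_simplicial {V : Type*} [Fintype V]
    (G : SimpleGraph V) (hG : G.IsChordal) (hV : 2 ≤ Fintype.card V) :
    ∃ u v : V, u ≠ v ∧ G.IsSimplicial u ∧ G.IsSimplicial v := by
  classical
  rcases ChordalAux.dirac hG Finset.univ with hclq | ⟨u, _, v, _, _, hne, hu, hv⟩
  · obtain ⟨a, b, hab⟩ := Fintype.exists_pair_of_one_lt_card (α := V) (by omega)
    exact ⟨a, b, hab,
      fun p q h1 h2 hpq => hclq p (Finset.mem_univ p) q (Finset.mem_univ q) hpq,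
      fun p q h1 h2 hpq => hclq p (Finset.mem_univ p) q (Finset.mem_univ q) hpq⟩
  · exact ⟨u, v, hne,
      fun p q h1 h2 hpq => hu p (Finset.mem_univ p) q (Finset.mem_univ q) h1 h2 hpq,
      fun p q h1 h2 hpq => hv p (Finset.mem_univ p) q (Finset.mem_univ q) h1 h2 hpq⟩
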